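/- arXiv:2004.07996 — 2 statements merged into one kernel-verified Lean document; each statement's English description precedes it below -/
import Mathlib

section
/- Let n ≥ 1, let p : Fin n → ℝ² be in counterclockwise convex position, and let q : Fin n → ℝ² be such that q ∘ π is in counterclockwise convex position for some bijection π : Fin n → Fin n. Let x ∈ Fin n and let s = (s_0, …, s_{m−1}) be a maximal greedy sequence from x with m < n. Then for every label y ∈ {s_0, …, s_{m−1}} there is no bijection σ : Fin n → Fin n with σ 0 = y whose spanning path is noncrossing on both p and q; that is, no label occurring in s can be the first label of compatible paths of p and q. -/
/-- Signed area determinant of two vectors in the plane. -/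
def det2 (u v : ℝ × ℝ) : ℝ := u.1 * v.2 - u.2 * v.1

/-- `p` lists points in counterclockwise convex position. -/
def CCWConvex {n : ℕ} (p : Fin n → ℝ × ℝ) : Prop :=
  ∀ i j k : Fin n, i < j → j < k → 0 < det2 (p j - p i) (p k - p i)

/-- The path visiting `f 0, f 1, …` is noncrossing: consecutive edges meet exactly at
their shared vertex, and nonconsecutive edges are disjoint. -/
def NoncrossingPath {m : ℕ} (f : Fin m → ℝ × ℝ) : Prop :=
  ∀ k l : ℕ, ∀ hk : k + 1 < m, ∀ hl : l + 1 < m, k < l →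
    if l = k + 1 then
      segment ℝ (f ⟨k, by omega⟩) (f ⟨k + 1, hk⟩) ∩
        segment ℝ (f ⟨l, by omega⟩) (f ⟨l + 1, hl⟩) = {f ⟨k + 1, hk⟩}
    else
      Disjoint (segment ℝ (f ⟨k, by omega⟩) (f ⟨k + 1, hk⟩))
        (segment ℝ (f ⟨l, by omega⟩) (f ⟨l + 1, hl⟩))

/-- `A` is a cyclic arc of `Fin n`: a set of the form `{i, i+1, …, i+t-1}` (mod `n`). -/
def IsArc {n : ℕ} (A : Set (Fin n)) : Prop :=
  ∃ i t : ℕ, t ≤ n ∧ ∀ x : Fin n, x ∈ A ↔ ∃ r < t, (x : ℕ) = (i + r) % n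

/-- `s` is a greedy sequence from the label `x`: a nonempty sequence of pairwise distinct
labels starting at `x`, each of whose prefix sets is simultaneously a cyclic arc of the
hull of `p` (i.e. an arc of `Fin n`) and of the hull of `q` (i.e. has arc preimage
under `π`). -/
def GreedySeq {n : ℕ} (π : Equiv.Perm (Fin n)) (x : Fin n)
    {m : ℕ} (s : Fin m → Fin n) : Prop :=
  0 < m ∧ Function.Injective s ∧ (∀ h : 0 < m, s ⟨0, h⟩ = x) ∧
    ∀ r : ℕ, 1 ≤ r → r ≤ m →
      IsArc {y : Fin n | ∃ j : Fin m, (j : ℕ) < r ∧ s j = y} ∧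
      IsArc (⇑π ⁻¹' {y : Fin n | ∃ j : Fin m, (j : ℕ) < r ∧ s j = y})

/-- Appending the label `ℓ` at the end of the sequence `s`. -/
def extendSeq {n m : ℕ} (s : Fin m → Fin n) (ℓ : Fin n) : Fin (m + 1) → Fin n :=
  fun j => if h : (j : ℕ) < m then s ⟨j, h⟩ else ℓ

/-- A greedy sequence is maximal if no label can be appended keeping it greedy. -/
def MaximalGreedySeq {n : ℕ} (π : Equiv.Perm (Fin n)) (x : Fin n)
    {m : ℕ} (s : Fin m → Fin n) : Prop :=
  GreedySeq π x s ∧ ¬ ∃ ℓ : Fin n, GreedySeq π x (extendSeq s ℓ)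
set_option maxHeartbeats 1000000

/-! ### auxiliary lemmas -/

lemma ratio_mem (a b : ℝ) (h : a * b < 0) : a / (a - b) ∈ Set.Icc (0:ℝ) 1 := by
  rcases mul_neg_iff.mp h with ⟨h1, h2⟩ | ⟨h1, h2⟩
  · exact ⟨div_nonneg h1.le (by linarith), by rw [div_le_one (by linarith)]; linarith⟩
  · have e : a / (a - b) = (-a) / (b - a) := by
      rw [← neg_div_neg_eq]; ring_nf
    rw [e]
    exact ⟨div_nonneg (by linarith) (by linarith),
      by rw [div_le_one (by linarith)]; linarith⟩

lemma seg_cross (A B C D : ℝ × ℝ)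
    (h1 : det2 (B - A) (C - A) * det2 (B - A) (D - A) < 0)
    (h2 : det2 (D - C) (A - C) * det2 (D - C) (B - C) < 0) :
    ¬ Disjoint (segment ℝ A B) (segment ℝ C D) := by
  set α := det2 (D - C) (A - C) with hα
  set β := det2 (D - C) (B - C) with hβ
  set γ := det2 (B - A) (C - A) with hγ
  set δ := det2 (B - A) (D - A) with hδ
  have hΔ : α - β ≠ 0 := by
    rcases mul_neg_iff.mp h2 with ⟨h, h'⟩ | ⟨h, h'⟩ <;> intro hc <;> linarith
  have hΔ' : γ - δ ≠ 0 := by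
    rcases mul_neg_iff.mp h1 with ⟨h, h'⟩ | ⟨h, h'⟩ <;> intro hc <;> linarith
  set t : ℝ := α / (α - β) with ht
  set s : ℝ := γ / (γ - δ) with hs
  have htmem : t ∈ Set.Icc (0:ℝ) 1 := ratio_mem _ _ h2
  have hsmem : s ∈ Set.Icc (0:ℝ) 1 := ratio_mem _ _ h1
  have hXY : A + t • (B - A) = C + s • (D - C) := by
    have e1 : A.1 + t * (B.1 - A.1) = C.1 + s * (D.1 - C.1) := by
      rw [ht, hs]
      field_simp
      simp only [hα, hβ, hγ, hδ, det2, Prod.fst_sub, Prod.snd_sub]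
      ring
    have e2 : A.2 + t * (B.2 - A.2) = C.2 + s * (D.2 - C.2) := by
      rw [ht, hs]
      field_simp
      simp only [hα, hβ, hγ, hδ, det2, Prod.fst_sub, Prod.snd_sub]
      ring
    have : (A + t • (B - A)).1 = (C + s • (D - C)).1 ∧
        (A + t • (B - A)).2 = (C + s • (D - C)).2 := by
      simpa using ⟨e1, e2⟩
    exact Prod.ext this.1 this.2
  rw [Set.not_disjoint_iff]
  refine ⟨A + t • (B - A), ?_, ?_⟩
  · rw [segment_eq_image']; exact ⟨t, htmem, rfl⟩
  · rw [segment_eq_image']; exact ⟨s, hsmem, hXY.symm⟩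

/-! ### ccw combinatorics -/

def ccw3 {n : ℕ} (a b c : Fin n) : Prop :=
  (a < b ∧ b < c) ∨ (b < c ∧ c < a) ∨ (c < a ∧ a < b)

lemma det3_cyc {n : ℕ} (p : Fin n → ℝ × ℝ) (a b c : Fin n) :
    det2 (p b - p a) (p c - p a) = det2 (p c - p b) (p a - p b) := by
  simp only [det2, Prod.fst_sub, Prod.snd_sub]; ring

lemma det3_swap {n : ℕ} (p : Fin n → ℝ × ℝ) (a b c : Fin n) :
    det2 (p b - p a) (p c - p a) = - det2 (p c - p a) (p b - p a) := by
  simp only [det2, Prod.fst_sub, Prod.snd_sub]; ring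

lemma det3_swap12 {n : ℕ} (p : Fin n → ℝ × ℝ) (a b c : Fin n) :
    det2 (p b - p a) (p c - p a) = - det2 (p a - p b) (p c - p b) := by
  simp only [det2, Prod.fst_sub, Prod.snd_sub]; ring

lemma ccw3_pos {n : ℕ} {p : Fin n → ℝ × ℝ} (hp : CCWConvex p) {a b c : Fin n}
    (h : ccw3 a b c) : 0 < det2 (p b - p a) (p c - p a) := by
  rcases h with ⟨h1, h2⟩ | ⟨h1, h2⟩ | ⟨h1, h2⟩
  · exact hp a b c h1 h2
  · rw [det3_cyc]; exact hp b c a h1 h2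
  · rw [det3_cyc, det3_cyc]; exact hp c a b h1 h2

lemma ccw3_tri {n : ℕ} {a b c : Fin n} (hab : a ≠ b) (hbc : b ≠ c) (hac : a ≠ c) :
    ccw3 a b c ∨ ccw3 a c b := by
  simp only [ccw3, Fin.lt_def]
  rw [← Fin.val_ne_iff] at hab hbc hac
  omega

lemma det3_pos_iff {n : ℕ} {p : Fin n → ℝ × ℝ} (hp : CCWConvex p) {a b c : Fin n}
    (hab : a ≠ b) (hbc : b ≠ c) (hac : a ≠ c) :
    0 < det2 (p b - p a) (p c - p a) ↔ ccw3 a b c := by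
  constructor
  · intro hpos
    rcases ccw3_tri hab hbc hac with h | h
    · exact h
    · have := ccw3_pos hp h
      rw [det3_swap] at hpos
      linarith
  · exact ccw3_pos hp

lemma det3_ne {n : ℕ} {p : Fin n → ℝ × ℝ} (hp : CCWConvex p) {a b c : Fin n}
    (hab : a ≠ b) (hbc : b ≠ c) (hac : a ≠ c) :
    det2 (p b - p a) (p c - p a) ≠ 0 := by
  rcases ccw3_tri hab hbc hac with h | h
  · exact (ccw3_pos hp h).ne'
  · have := ccw3_pos hp h
    rw [det3_swap] at this
    linarith

lemma ccw3_quad {n : ℕ} {a s u v : Fin n} (h1 : ccw3 a s u) (h2 : ccw3 a v s) :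
    ccw3 u v s ∧ ccw3 u a v := by
  simp only [ccw3, Fin.lt_def] at *
  omega

/-! ### arc machinery -/

def ArcP {n : ℕ} (A : Set (Fin n)) (i t : ℕ) : Prop :=
  ∀ x : Fin n, x ∈ A ↔ ((i ≤ x.val ∧ x.val < i + t) ∨ (x.val + n < i + t))

lemma mem_arc_iff {n i t : ℕ} (hi : i < n) (ht : t ≤ n) (x : ℕ) (hx : x < n) :
    (∃ r < t, x = (i + r) % n) ↔ ((i ≤ x ∧ x < i + t) ∨ (x + n < i + t)) := by
  constructor
  · rintro ⟨r, hr, hxe⟩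
    rcases Nat.lt_or_ge (i + r) n with h | h
    · rw [Nat.mod_eq_of_lt h] at hxe; omega
    · have h2 : i + r - n < n := by omega
      rw [Nat.mod_eq_sub_mod h, Nat.mod_eq_of_lt h2] at hxe; omega
  · rintro (⟨h1, h2⟩ | h1)
    · exact ⟨x - i, by omega, by rw [Nat.add_sub_cancel' h1, Nat.mod_eq_of_lt hx]⟩
    · refine ⟨x + n - i, by omega, ?_⟩
      rw [Nat.add_sub_cancel' (by omega), Nat.add_mod_right, Nat.mod_eq_of_lt hx]

lemma isArc_iff {n : ℕ} (hn : 0 < n) (A : Set (Fin n)) :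
    IsArc A ↔ ∃ i, i < n ∧ ∃ t, t ≤ n ∧ ArcP A i t := by
  constructor
  · rintro ⟨i, t, ht, h⟩
    refine ⟨i % n, Nat.mod_lt _ hn, t, ht, fun x => ?_⟩
    rw [← mem_arc_iff (Nat.mod_lt _ hn) ht x.val x.isLt]
    rw [h x]
    constructor <;> rintro ⟨r, hr, hxe⟩ <;> exact ⟨r, hr, by rw [hxe, Nat.mod_add_mod]⟩
  · rintro ⟨i, hi, t, ht, h⟩
    exact ⟨i, t, ht, fun x => by rw [h x, ← mem_arc_iff hi ht x.val x.isLt]⟩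

lemma isArc_empty {n : ℕ} : IsArc (∅ : Set (Fin n)) :=
  ⟨0, 0, Nat.zero_le _, fun x => by simp⟩

lemma isArc_singleton {n : ℕ} (y : Fin n) : IsArc ({y} : Set (Fin n)) := by
  refine ⟨y.val, 1, by have := y.isLt; omega, fun x => ?_⟩
  simp only [Set.mem_singleton_iff]
  constructor
  · rintro rfl; exact ⟨0, by omega, by rw [Nat.add_zero, Nat.mod_eq_of_lt x.isLt]⟩
  · rintro ⟨r, hr, hxe⟩
    have : r = 0 := by omega
    subst this
    rw [Nat.add_zero, Nat.mod_eq_of_lt y.isLt] at hxe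
    exact Fin.ext hxe

/-- cyclic successor relation : `b = a + 1 (mod n)` -/
def CNext {n : ℕ} (a b : Fin n) : Prop :=
  (a.val + 1 = b.val) ∨ (a.val = n - 1 ∧ b.val = 0)

lemma exists_cnext {n : ℕ} (b : Fin n) : ∃ d : Fin n, CNext b d := by
  rcases Nat.lt_or_ge (b.val + 1) n with h | h
  · exact ⟨⟨b.val + 1, h⟩, Or.inl rfl⟩
  · exact ⟨⟨0, by omega⟩, Or.inr ⟨by have := b.isLt; omega, rfl⟩⟩

lemma exists_cprev {n : ℕ} (b : Fin n) : ∃ c : Fin n, CNext c b := by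
  rcases eq_or_ne b.val 0 with h | h
  · exact ⟨⟨n - 1, by have := b.isLt; omega⟩, Or.inr ⟨rfl, h⟩⟩
  · exact ⟨⟨b.val - 1, by have := b.isLt; omega⟩,
      Or.inl (show b.val - 1 + 1 = b.val by omega)⟩

lemma ccw3_cnext {n : ℕ} {a c b : Fin n} (h : CNext c b) (hac : a ≠ c) (hab : a ≠ b) :
    ccw3 a c b := by
  simp only [ccw3, Fin.lt_def]
  rw [← Fin.val_ne_iff] at hac hab
  have := a.isLt; have := b.isLt; have := c.isLt
  rcases h with h | h <;> omega

lemma isArc_extend {n : ℕ} (hn : 0 < n) {A : Set (Fin n)} {ℓ : Fin n}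
    (hA : IsArc A) (hℓ : ℓ ∉ A)
    (hnb : (∃ d, CNext ℓ d ∧ d ∈ A) ∨ (∃ c, CNext c ℓ ∧ c ∈ A)) :
    IsArc (A ∪ {ℓ}) := by
  rw [isArc_iff hn] at hA ⊢
  obtain ⟨i, hi, t, ht, hchar⟩ := hA
  have hlnum : ¬ ((i ≤ ℓ.val ∧ ℓ.val < i + t) ∨ (ℓ.val + n < i + t)) :=
    fun h => hℓ ((hchar ℓ).mpr h)
  have htlt : t < n := by
    rcases Nat.eq_or_lt_of_le ht with rfl | h
    · exfalso; have := ℓ.isLt; omega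
    · exact h
  rcases hnb with ⟨d, hcn, hdA⟩ | ⟨c, hcn, hcA⟩
  · have hdnum := (hchar d).mp hdA
    refine ⟨ℓ.val, ℓ.isLt, t + 1, by omega, fun x => ?_⟩
    have hxnum := hchar x
    have hxlt := x.isLt
    have hdlt := d.isLt
    have hllt := ℓ.isLt
    constructor
    · rintro (hxA | hxl)
      · have := hxnum.mp hxA
        rcases hcn with h | h <;> omega
      · have : x = ℓ := hxl
        subst this
        rcases hcn with h | h <;> omega
    · intro hnum
      by_cases hxl : x.val = ℓ.val
      · right; exact Fin.ext hxl
      · left; apply hxnum.mpr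
        rcases hcn with h | h <;> omega
  · have hcnum := (hchar c).mp hcA
    refine ⟨i, hi, t + 1, by omega, fun x => ?_⟩
    have hxnum := hchar x
    have hxlt := x.isLt
    have hclt := c.isLt
    have hllt := ℓ.isLt
    constructor
    · rintro (hxA | hxl)
      · have := hxnum.mp hxA
        rcases hcn with h | h <;> omega
      · have : x = ℓ := hxl
        subst this
        rcases hcn with h | h <;> omega
    · intro hnum
      by_cases hxl : x.val = ℓ.val
      · right; exact Fin.ext hxl
      · left; apply hxnum.mpr
        rcases hcn with h | h <;> omega

lemma isArc_neighbor {n : ℕ} (hn : 0 < n) {T : Set (Fin n)} {ℓ w : Fin n}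
    (hT : IsArc T) (hl : ℓ ∈ T) (hw : w ∈ T) (hwl : w ≠ ℓ) :
    ∃ z : Fin n, (CNext ℓ z ∨ CNext z ℓ) ∧ z ∈ T ∧ z ≠ ℓ := by
  rw [isArc_iff hn] at hT
  obtain ⟨j, hj, u, hu, hchar⟩ := hT
  obtain ⟨d, hd⟩ := exists_cnext ℓ
  obtain ⟨c, hc⟩ := exists_cprev ℓ
  have hlnum := (hchar ℓ).mp hl
  have hwnum := (hchar w).mp hw
  have hwlv : w.val ≠ ℓ.val := fun h => hwl (Fin.ext h)
  have hllt := ℓ.isLt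
  have hwlt := w.isLt
  have hdlt := d.isLt
  have hclt := c.isLt
  have key : (((j ≤ d.val ∧ d.val < j + u) ∨ (d.val + n < j + u)) ∧ d.val ≠ ℓ.val)
      ∨ (((j ≤ c.val ∧ c.val < j + u) ∨ (c.val + n < j + u)) ∧ c.val ≠ ℓ.val) := by
    rcases hd with h1 | h1 <;> rcases hc with h2 | h2 <;> omega
  rcases key with ⟨h, hne⟩ | ⟨h, hne⟩
  · exact ⟨d, Or.inl hd, (hchar d).mpr h, fun he => hne (congrArg Fin.val he)⟩
  · exact ⟨c, Or.inr hc, (hchar c).mpr h, fun he => hne (congrArg Fin.val he)⟩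

/-! ### discrete intermediate value -/

lemma discrete_ivt (g : ℕ → ℝ) (t1 t2 : ℕ) (h12 : t1 ≤ t2)
    (hnz : ∀ j, t1 ≤ j → j ≤ t2 → g j ≠ 0) (hneg : g t1 * g t2 < 0) :
    ∃ j, t1 ≤ j ∧ j < t2 ∧ g j * g (j+1) < 0 := by
  induction t2, h12 using Nat.le_induction with
  | base => exfalso; nlinarith [mul_self_nonneg (g t1)]
  | succ t2 h ih =>
    by_cases hc : g t1 * g t2 < 0
    · obtain ⟨j, hj1, hj2, hj3⟩ := ih (fun j a b => hnz j a (by omega)) hc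
      exact ⟨j, hj1, by omega, hj3⟩
    · refine ⟨t2, h, by omega, ?_⟩
      have h1 : g t1 ≠ 0 := hnz t1 le_rfl (by omega)
      have h2 : g t2 ≠ 0 := hnz t2 h (by omega)
      have hpos : 0 < g t1 * g t2 :=
        lt_of_le_of_ne (not_lt.mp hc) (Ne.symm (mul_ne_zero h1 h2))
      rcases h1.lt_or_gt with hs | hs
      · have hb : g t2 < 0 := by nlinarith
        have hb2 : 0 < g (t2+1) := by nlinarith
        nlinarith
      · have hb : 0 < g t2 := by nlinarith
        have hb2 : g (t2+1) < 0 := by nlinarith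
        nlinarith

/-! ### prefix sets of noncrossing paths on convex position are cyclic arcs -/

lemma prefix_arcs {n : ℕ} (p : Fin n → ℝ × ℝ) (hp : CCWConvex p)
    (σ : Equiv.Perm (Fin n)) (hnc : NoncrossingPath (p ∘ ⇑σ)) :
    ∀ r : ℕ, r ≤ n → IsArc {z : Fin n | ∃ j : Fin n, (j : ℕ) < r ∧ σ j = z} := by
  intro r
  induction r with
  | zero =>
    intro _
    have he : {z : Fin n | ∃ j : Fin n, (j : ℕ) < 0 ∧ σ j = z} = ∅ := by
      ext z; simp
    rw [he]; exact isArc_empty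
  | succ r ih =>
    intro hr1
    have hrn : r < n := hr1
    have hn0 : 0 < n := by omega
    set P := {z : Fin n | ∃ j : Fin n, (j : ℕ) < r ∧ σ j = z} with hPdef
    have hPr : IsArc P := ih (le_of_lt hrn)
    set b := σ ⟨r, hrn⟩ with hbdef
    have hPeq : {z : Fin n | ∃ j : Fin n, (j : ℕ) < r + 1 ∧ σ j = z} = P ∪ {b} := by
      ext z
      simp only [hPdef, Set.mem_setOf_eq, Set.mem_union, Set.mem_singleton_iff]
      constructor
      · rintro ⟨j, hj, rfl⟩
        rcases Nat.lt_or_ge (j : ℕ) r with h | h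
        · exact Or.inl ⟨j, h, rfl⟩
        · right
          have hje : j = (⟨r, hrn⟩ : Fin n) := Fin.ext (show (j:ℕ) = r by omega)
          rw [hje, hbdef]
      · rintro (⟨j, hj, rfl⟩ | rfl)
        · exact ⟨j, by omega, rfl⟩
        · exact ⟨⟨r, hrn⟩, by simp, rfl⟩
    rw [hPeq]
    rcases Nat.eq_zero_or_pos r with rfl | hrpos
    · have he : P = ∅ := by
        ext z; simp [hPdef]
      rw [he, Set.empty_union]
      exact isArc_singleton b
    have hbP : b ∉ P := by
      rintro ⟨j, hj, hje⟩
      have hje' : j = (⟨r, hrn⟩ : Fin n) := σ.injective hje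
      rw [hje'] at hj
      simp at hj
    by_cases hnb : (∃ d, CNext b d ∧ d ∈ P) ∨ (∃ c, CNext c b ∧ c ∈ P)
    · exact isArc_extend hn0 hPr hbP hnb
    exfalso
    obtain ⟨d, hd⟩ := exists_cnext b
    obtain ⟨c, hc⟩ := exists_cprev b
    have hdP : d ∉ P := fun h => hnb (Or.inl ⟨d, hd, h⟩)
    have hcP : c ∉ P := fun h => hnb (Or.inr ⟨c, hc, h⟩)
    have hr1n : r - 1 < n := by omega
    set a := σ ⟨r - 1, hr1n⟩ with hadef
    have haP : a ∈ P := ⟨⟨r - 1, hr1n⟩, by simp; omega, rfl⟩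
    have hab : a ≠ b := fun h => hbP (h ▸ haP)
    have hac : a ≠ c := fun h => hcP (h ▸ haP)
    have had : a ≠ d := fun h => hdP (h ▸ haP)
    have hcb : c ≠ b := by
      intro h
      rw [← Fin.val_eq_val] at h
      have := b.isLt
      rcases hc with h' | h' <;> omega
    have hdb : d ≠ b := by
      intro h
      rw [← Fin.val_eq_val] at h
      have := b.isLt
      rcases hd with h' | h' <;> omega
    -- times at which c and d are visited
    have htc : r < (σ.symm c).val := by
      rcases Nat.lt_trichotomy (σ.symm c).val r with h | h | h
      · exact absurd ⟨σ.symm c, h, σ.apply_symm_apply c⟩ hcP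
      · exfalso
        apply hcb
        have hsc : σ.symm c = (⟨r, hrn⟩ : Fin n) := Fin.ext h
        rw [← σ.apply_symm_apply c, hsc, hbdef]
      · exact h
    have htd : r < (σ.symm d).val := by
      rcases Nat.lt_trichotomy (σ.symm d).val r with h | h | h
      · exact absurd ⟨σ.symm d, h, σ.apply_symm_apply d⟩ hdP
      · exfalso
        apply hdb
        have hsd : σ.symm d = (⟨r, hrn⟩ : Fin n) := Fin.ext h
        rw [← σ.apply_symm_apply d, hsd, hbdef]
      · exact h
    -- the sign function along the path
    set g : ℕ → ℝ := fun j =>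
      if h : j < n then det2 (p b - p a) (p (σ ⟨j, h⟩) - p a) else 0 with hgdef
    have gval : ∀ (j : ℕ) (h : j < n),
        g j = det2 (p b - p a) (p (σ ⟨j, h⟩) - p a) := by
      intro j h
      simp only [hgdef]
      rw [dif_pos h]
    -- main crossing argument
    have main : ∀ (e f : Fin n), r < e.val → r < f.val → e.val ≤ f.val →
        g e.val * g f.val < 0 → False := by
      intro e f he hf hef hsign
      have hnz : ∀ j, e.val ≤ j → j ≤ f.val → g j ≠ 0 := by
        intro j hj1 hj2
        have hjn : j < n := lt_of_le_of_lt hj2 f.isLt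
        rw [gval j hjn]
        have h1 : σ ⟨j, hjn⟩ ≠ b := by
          intro h
          have hh := σ.injective h
          rw [Fin.mk.injEq] at hh; omega
        have h2 : σ ⟨j, hjn⟩ ≠ a := by
          intro h
          have hh := σ.injective h
          rw [Fin.mk.injEq] at hh; omega
        exact det3_ne hp hab (fun h => h1 h.symm) (fun h => h2 h.symm)
      obtain ⟨j, hj1, hj2, hj3⟩ := discrete_ivt g e.val f.val hef hnz hsign
      have hjn : j < n := by have := f.isLt; omega
      have hj1n : j + 1 < n := by have := f.isLt; omega
      set u' := σ ⟨j, hjn⟩ with hu'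
      set v' := σ ⟨j+1, hj1n⟩ with hv'
      have hune : u' ≠ v' := by
        intro h
        have hh := σ.injective h
        rw [Fin.mk.injEq] at hh; omega
      have hub : u' ≠ b := by
        intro h; have hh := σ.injective h; rw [Fin.mk.injEq] at hh; omega
      have hua : u' ≠ a := by
        intro h; have hh := σ.injective h; rw [Fin.mk.injEq] at hh; omega
      have hvb : v' ≠ b := by
        intro h; have hh := σ.injective h; rw [Fin.mk.injEq] at hh; omega
      have hva : v' ≠ a := by
        intro h; have hh := σ.injective h; rw [Fin.mk.injEq] at hh; omega
      rw [gval j hjn, gval (j+1) hj1n, ← hu', ← hv'] at hj3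
      have key : ∀ u v : Fin n, u ≠ v → u ≠ a → u ≠ b → v ≠ a → v ≠ b →
          0 < det2 (p b - p a) (p u - p a) → det2 (p b - p a) (p v - p a) < 0 →
          det2 (p v - p u) (p a - p u) * det2 (p v - p u) (p b - p u) < 0 := by
        intro u v huv hua hub hva hvb hDu hDv
        have cu : ccw3 a b u := (det3_pos_iff hp hab (fun h => hub h.symm)
          (fun h => hua h.symm)).mp hDu
        have cv : ccw3 a v b := by
          have hp' : 0 < det2 (p v - p a) (p b - p a) := by
            rw [det3_swap p a b v] at hDv; linarith
          exact (det3_pos_iff hp (fun h => hva h.symm) (fun h => hvb h) hab).mp hp'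
        obtain ⟨q1, q2⟩ := ccw3_quad cu cv
        have hDuvb : 0 < det2 (p v - p u) (p b - p u) := ccw3_pos hp q1
        have hDuav : 0 < det2 (p a - p u) (p v - p u) := ccw3_pos hp q2
        have hneg : det2 (p v - p u) (p a - p u) < 0 := by
          rw [det3_swap p u v a]; linarith
        nlinarith
      have hcontra :
          det2 (p v' - p u') (p a - p u') * det2 (p v' - p u') (p b - p u') < 0 := by
        rcases (mul_neg_iff.mp hj3) with ⟨hpos, hneg'⟩ | ⟨hneg', hpos⟩
        · exact key u' v' hune hua hub hva hvb hpos hneg'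
        · have hk := key v' u' (Ne.symm hune) hva hvb hua hub hpos hneg'
          have e1 : det2 (p u' - p v') (p a - p v') = - det2 (p v' - p u') (p a - p u') :=
            det3_swap12 p v' u' a
          have e2 : det2 (p u' - p v') (p b - p v') = - det2 (p v' - p u') (p b - p u') :=
            det3_swap12 p v' u' b
          rw [e1, e2] at hk
          nlinarith
      -- contradiction with the noncrossing hypothesis
      have hkk : (r - 1) + 1 < n := by omega
      have hll : j + 1 < n := hj1n
      have hkl : r - 1 < j := by omega
      have H := hnc (r-1) j hkk hll hkl
      rw [if_neg (by omega : ¬ j = (r-1) + 1)] at H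
      have hfk : (⟨r - 1 + 1, hkk⟩ : Fin n) = ⟨r, hrn⟩ := Fin.ext (by simp; omega)
      rw [hfk] at H
      exact seg_cross (p a) (p b) (p u') (p v') hj3 hcontra H
    -- the two endpoints have opposite signs
    have hgc : g (σ.symm c).val < 0 := by
      rw [gval _ (σ.symm c).isLt, σ.apply_symm_apply]
      have hccw : ccw3 a c b := ccw3_cnext hc hac hab
      have hpos : 0 < det2 (p c - p a) (p b - p a) := ccw3_pos hp hccw
      rw [det3_swap p a b c]; linarith
    have hgd : 0 < g (σ.symm d).val := by
      rw [gval _ (σ.symm d).isLt, σ.apply_symm_apply]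
      exact ccw3_pos hp (ccw3_cnext hd hab had)
    rcases le_total (σ.symm c).val (σ.symm d).val with h | h
    · exact main (σ.symm c) (σ.symm d) htc htd h (mul_neg_of_neg_of_pos hgc hgd)
    · exact main (σ.symm d) (σ.symm c) htd htc h (mul_neg_of_pos_of_neg hgd hgc)
theorem no_start_in_short_greedy {n : ℕ} (hn : 1 ≤ n)
    (p q : Fin n → ℝ × ℝ) (hp : CCWConvex p)
    (π : Equiv.Perm (Fin n)) (hq : CCWConvex (q ∘ π))
    (x : Fin n) (m : ℕ) (s : Fin m → Fin n)
    (hmax : MaximalGreedySeq π x s) (hshort : m < n) :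
    ∀ y : Fin n, (∃ j : Fin m, s j = y) →
      ¬ ∃ σ : Equiv.Perm (Fin n), σ ⟨0, by omega⟩ = y ∧
          NoncrossingPath (p ∘ σ) ∧ NoncrossingPath (q ∘ σ) := by
  intro y hy
  rintro ⟨σ, hσ0, hncp, hncq⟩
  have hn0 : 0 < n := hn
  obtain ⟨hm0, hinj, hstart, harcs⟩ := hmax.1
  set S := {z : Fin n | ∃ j : Fin m, (j : ℕ) < m ∧ s j = z} with hSdef
  have hyS : y ∈ S := by obtain ⟨j, hj⟩ := hy; exact ⟨j, j.isLt, hj⟩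
  have hSarc : IsArc S := (harcs m hm0 le_rfl).1
  have hSarcq : IsArc (⇑π ⁻¹' S) := (harcs m hm0 le_rfl).2
  -- prefix sets of σ are double arcs
  set T : ℕ → Set (Fin n) :=
    fun r => {z : Fin n | ∃ j : Fin n, (j : ℕ) < r ∧ σ j = z} with hTdef
  have hTarc : ∀ r, r ≤ n → IsArc (T r) := prefix_arcs p hp σ hncp
  have hTarcq : ∀ r, r ≤ n → IsArc (⇑π ⁻¹' (T r)) := by
    intro r hr
    have hcomp : (q ∘ ⇑π) ∘ ⇑(σ.trans π.symm) = q ∘ ⇑σ := by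
      funext j
      simp [Equiv.trans_apply, Function.comp]
    have hσ' : NoncrossingPath ((q ∘ ⇑π) ∘ ⇑(σ.trans π.symm)) := by
      rw [hcomp]; exact hncq
    have harc := prefix_arcs (q ∘ ⇑π) hq (σ.trans π.symm) hσ' r hr
    have hseteq : {z : Fin n | ∃ j : Fin n, (j : ℕ) < r ∧ (σ.trans π.symm) j = z}
        = ⇑π ⁻¹' (T r) := by
      ext z
      simp only [hTdef, Set.mem_setOf_eq, Set.mem_preimage, Equiv.trans_apply]
      constructor
      · rintro ⟨j, hj, rfl⟩; exact ⟨j, hj, by simp⟩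
      · rintro ⟨j, hj, hje⟩
        refine ⟨j, hj, ?_⟩
        rw [hje]; simp
    rwa [hseteq] at harc
  classical
  have hTn : ¬ (T n ⊆ S) := by
    intro hsubn
    have hsurj : Function.Surjective s := by
      intro z
      have hz : z ∈ T n := ⟨σ.symm z, (σ.symm z).isLt, σ.apply_symm_apply z⟩
      obtain ⟨j, _, hje⟩ := hsubn hz
      exact ⟨j, hje⟩
    have hcard := Fintype.card_le_of_surjective s hsurj
    simp only [Fintype.card_fin] at hcard
    omega
  have hex : ∃ r, ¬ (T r ⊆ S) := ⟨n, hTn⟩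
  set r0 := Nat.find hex with hr0def
  have hspec : ¬ (T r0 ⊆ S) := Nat.find_spec hex
  have hmin : ∀ r', r' < r0 → T r' ⊆ S :=
    fun r' h => not_not.mp (Nat.find_min hex h)
  have hr0n : r0 ≤ n := Nat.find_le hTn
  have hT0 : T 0 ⊆ S := by
    rintro z ⟨j, hj, rfl⟩
    omega
  have hT1 : T 1 ⊆ S := by
    rintro z ⟨j, hj, rfl⟩
    have hje : j = (⟨0, hn0⟩ : Fin n) := Fin.ext (show (j:ℕ) = 0 by omega)
    rw [hje, hσ0]; exact hyS
  have hr02 : 2 ≤ r0 := by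
    rcases Nat.lt_or_ge r0 2 with h | h
    · exfalso
      interval_cases r0
      · exact hspec hT0
      · exact hspec hT1
    · exact h
  have hr01n : r0 - 1 < n := by omega
  set ℓ := σ ⟨r0 - 1, hr01n⟩ with hldef
  have hsplit : T r0 = T (r0 - 1) ∪ {ℓ} := by
    ext z
    simp only [hTdef, Set.mem_setOf_eq, Set.mem_union, Set.mem_singleton_iff]
    constructor
    · rintro ⟨j, hj, rfl⟩
      rcases Nat.lt_or_ge (j : ℕ) (r0 - 1) with h | h
      · exact Or.inl ⟨j, h, rfl⟩
      · right
        have hje : j = (⟨r0 - 1, hr01n⟩ : Fin n) :=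
          Fin.ext (show (j:ℕ) = r0 - 1 by omega)
        rw [hje, hldef]
    · rintro (⟨j, hj, rfl⟩ | rfl)
      · exact ⟨j, by omega, rfl⟩
      · exact ⟨⟨r0 - 1, hr01n⟩, by simp; omega, rfl⟩
  have hsub : T (r0 - 1) ⊆ S := hmin _ (by omega)
  have hlS : ℓ ∉ S := by
    intro h
    apply hspec
    rw [hsplit]
    rintro z (hz | hz)
    · exact hsub hz
    · rwa [hz]
  have hlT : ℓ ∈ T r0 := ⟨⟨r0 - 1, hr01n⟩, by simp; omega, rfl⟩
  have hyT1 : y ∈ T (r0 - 1) := by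
    refine ⟨⟨0, hn0⟩, by simp; omega, hσ0⟩
  have hyT : y ∈ T r0 := by rw [hsplit]; exact Or.inl hyT1
  have hyl : y ≠ ℓ := fun h => hlS (h ▸ hyS)
  -- p-side arc extension
  obtain ⟨z, hzcn, hzT, hzl⟩ := isArc_neighbor hn0 (hTarc r0 hr0n) hlT hyT hyl
  have hzS : z ∈ S := by
    have hz := hzT
    rw [hsplit] at hz
    rcases hz with h | h
    · exact hsub h
    · exact absurd h hzl
  have hSext : IsArc (S ∪ {ℓ}) := by
    apply isArc_extend hn0 hSarc hlS
    rcases hzcn with h | h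
    · exact Or.inl ⟨z, h, hzS⟩
    · exact Or.inr ⟨z, h, hzS⟩
  -- q-side arc extension
  have hlTq : π.symm ℓ ∈ ⇑π ⁻¹' (T r0) := by
    simp only [Set.mem_preimage, Equiv.apply_symm_apply]
    exact hlT
  have hyTq : π.symm y ∈ ⇑π ⁻¹' (T r0) := by
    simp only [Set.mem_preimage, Equiv.apply_symm_apply]
    exact hyT
  have hylq : π.symm y ≠ π.symm ℓ := fun h => hyl (by simpa using congrArg π h)
  obtain ⟨z', hzcn', hzT', hzl'⟩ :=
    isArc_neighbor hn0 (hTarcq r0 hr0n) hlTq hyTq hylq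
  have hpsing : ⇑π ⁻¹' ({ℓ} : Set (Fin n)) = {π.symm ℓ} := by
    ext w
    simp [Equiv.apply_eq_iff_eq_symm_apply]
  have hpreim : ⇑π ⁻¹' (T r0) = (⇑π ⁻¹' (T (r0 - 1))) ∪ {π.symm ℓ} := by
    rw [hsplit, Set.preimage_union, hpsing]
  have hzS' : z' ∈ ⇑π ⁻¹' S := by
    have hz := hzT'
    rw [hpreim] at hz
    rcases hz with h | h
    · exact Set.preimage_mono hsub h
    · exact absurd h hzl'
  have hlSq : π.symm ℓ ∉ ⇑π ⁻¹' S := by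
    simp only [Set.mem_preimage, Equiv.apply_symm_apply]
    exact hlS
  have hSextq : IsArc ((⇑π ⁻¹' S) ∪ {π.symm ℓ}) := by
    apply isArc_extend hn0 hSarcq hlSq
    rcases hzcn' with h | h
    · exact Or.inl ⟨z', h, hzS'⟩
    · exact Or.inr ⟨z', h, hzS'⟩
  -- contradiction with maximality: extend the greedy sequence by ℓ
  apply hmax.2
  refine ⟨ℓ, Nat.succ_pos m, ?_, ?_, ?_⟩
  · -- injectivity
    intro j1 j2 h
    simp only [extendSeq] at h
    split_ifs at h with h1 h2 h2
    · have hh := hinj h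
      rw [Fin.mk.injEq] at hh
      exact Fin.ext hh
    · exact absurd ⟨⟨(j1:ℕ), h1⟩, h1, h⟩ hlS
    · exact absurd ⟨⟨(j2:ℕ), h2⟩, h2, h.symm⟩ hlS
    · have := j1.isLt; have := j2.isLt
      exact Fin.ext (by omega)
  · -- starts at x
    intro h0
    simp only [extendSeq]
    rw [dif_pos hm0]
    exact hstart hm0
  · -- all prefixes are double arcs
    intro r hr1 hrm
    rcases Nat.lt_or_ge r (m + 1) with hlt | hge
    · have hrm' : r ≤ m := by omega
      have hEeq : {w : Fin n | ∃ j : Fin (m+1), (j:ℕ) < r ∧ extendSeq s ℓ j = w}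
          = {w : Fin n | ∃ j : Fin m, (j:ℕ) < r ∧ s j = w} := by
        ext w
        simp only [Set.mem_setOf_eq]
        constructor
        · rintro ⟨j, hj, hje⟩
          have hjm : (j:ℕ) < m := by omega
          refine ⟨⟨(j:ℕ), hjm⟩, hj, ?_⟩
          rw [← hje]
          simp [extendSeq, hjm]
        · rintro ⟨j, hj, hje⟩
          refine ⟨⟨(j:ℕ), by omega⟩, hj, ?_⟩
          rw [← hje]
          simp [extendSeq, j.isLt]
      rw [hEeq]
      exact harcs r hr1 hrm'
    · have hreq : r = m + 1 := by omega
      subst hreq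
      have hEeq : {w : Fin n | ∃ j : Fin (m+1), (j:ℕ) < m + 1 ∧ extendSeq s ℓ j = w}
          = S ∪ {ℓ} := by
        ext w
        simp only [hSdef, Set.mem_setOf_eq, Set.mem_union, Set.mem_singleton_iff]
        constructor
        · rintro ⟨j, hj, hje⟩
          by_cases hjm : (j:ℕ) < m
          · left
            refine ⟨⟨(j:ℕ), hjm⟩, hjm, ?_⟩
            rw [← hje]
            simp [extendSeq, hjm]
          · right
            rw [← hje]
            simp [extendSeq, hjm]
        · rintro (⟨j, hj, hje⟩ | rfl)
          · refine ⟨⟨(j:ℕ), by omega⟩, by omega, ?_⟩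
            rw [← hje]
            simp [extendSeq, j.isLt]
          · exact ⟨⟨m, by omega⟩, by simp, by simp [extendSeq]⟩
      rw [hEeq]
      exact ⟨hSext, by rw [Set.preimage_union, hpsing]; exact hSextq⟩
end

section
/- Let n ≥ 1, let p : Fin n → ℝ², let σ : Fin n → Fin n be a bijection, and suppose there exists a nonzero vector v ∈ ℝ² such that the function k ↦ ⟨p(σ k), v⟩ (standard inner product on ℝ²) is strictly increasing in k. Then p is injective and the spanning path of σ on p is noncrossing; that is, every monotone path is noncrossing. -/
/-- Projection onto `v`. -/
def projv (v x : ℝ × ℝ) : ℝ := x.1 * v.1 + x.2 * v.2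

lemma projv_segment {v u w x : ℝ × ℝ} (hx : x ∈ segment ℝ u w) :
    ∃ a b : ℝ, 0 ≤ a ∧ 0 ≤ b ∧ a + b = 1 ∧
      projv v x = a * projv v u + b * projv v w := by
  obtain ⟨a, b, ha, hb, hab, rfl⟩ := hx
  exact ⟨a, b, ha, hb, hab, by simp [projv, Prod.smul_def]; ring⟩

lemma projv_le {v u w x : ℝ × ℝ} (hx : x ∈ segment ℝ u w)
    (h : projv v u ≤ projv v w) : projv v u ≤ projv v x ∧ projv v x ≤ projv v w := by
  obtain ⟨a, b, ha, hb, hab, hxe⟩ := projv_segment (v := v) hx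
  have h1 : projv v x - projv v u = b * (projv v w - projv v u) := by
    linear_combination hxe + projv v u * hab
  have h2 : projv v w - projv v x = a * (projv v w - projv v u) := by
    linear_combination - hxe - projv v w * hab
  have hb' := mul_nonneg hb (sub_nonneg.2 h)
  have ha' := mul_nonneg ha (sub_nonneg.2 h)
  constructor <;> linarith

lemma projv_eq_right {v u w x : ℝ × ℝ} (hx : x ∈ segment ℝ u w)
    (h : projv v u < projv v w) (he : projv v x = projv v w) : x = w := by
  obtain ⟨a, b, ha, hb, hab, rfl⟩ := hx
  have hpx : projv v (a • u + b • w) = a * projv v u + b * projv v w := by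
    simp [projv, Prod.smul_def]; ring
  rw [hpx] at he
  have key : a * (projv v w - projv v u) = 0 := by
    linear_combination projv v w * hab - he
  have ha0 : a = 0 := by
    rcases mul_eq_zero.1 key with h0 | h0
    · exact h0
    · exfalso; linarith
  have hb1 : b = 1 := by linarith
  simp [ha0, hb1]

lemma projv_eq_left {v u w x : ℝ × ℝ} (hx : x ∈ segment ℝ u w)
    (h : projv v u < projv v w) (he : projv v x = projv v u) : x = u := by
  obtain ⟨a, b, ha, hb, hab, rfl⟩ := hx
  have hpx : projv v (a • u + b • w) = a * projv v u + b * projv v w := by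
    simp [projv, Prod.smul_def]; ring
  rw [hpx] at he
  have key : b * (projv v w - projv v u) = 0 := by
    linear_combination he - projv v u * hab
  have hb0 : b = 0 := by
    rcases mul_eq_zero.1 key with h0 | h0
    · exact h0
    · exfalso; linarith
  have ha1 : a = 1 := by linarith
  simp [ha1, hb0]

theorem monotone_path_noncrossing {n : ℕ} (hn : 1 ≤ n)
    (p : Fin n → ℝ × ℝ) (σ : Equiv.Perm (Fin n))
    (v : ℝ × ℝ) (hv : v ≠ 0)
    (hmono : StrictMono fun k : Fin n => (p (σ k)).1 * v.1 + (p (σ k)).2 * v.2) :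
    Function.Injective p ∧ NoncrossingPath (p ∘ σ) := by
  have hg : StrictMono fun k : Fin n => projv v (p (σ k)) := hmono
  constructor
  · intro i j hij
    have : projv v (p (σ (σ.symm i))) = projv v (p (σ (σ.symm j))) := by
      simp [hij]
    have := hg.injective this
    have := congrArg σ this
    simpa using this
  · intro k l hk hl hkl
    have hmem1 : ∀ x ∈ segment ℝ ((p ∘ σ) ⟨k, by omega⟩) ((p ∘ σ) ⟨k + 1, hk⟩),
        projv v x ≤ projv v ((p ∘ σ) ⟨k + 1, hk⟩) := by
      intro x hx
      exact (projv_le hx (le_of_lt (hg (show (⟨k, by omega⟩ : Fin n) < ⟨k + 1, hk⟩ by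
        simp [Fin.mk_lt_mk])))).2
    have hmem2 : ∀ x ∈ segment ℝ ((p ∘ σ) ⟨l, by omega⟩) ((p ∘ σ) ⟨l + 1, hl⟩),
        projv v ((p ∘ σ) ⟨l, by omega⟩) ≤ projv v x := by
      intro x hx
      exact (projv_le hx (le_of_lt (hg (show (⟨l, by omega⟩ : Fin n) < ⟨l + 1, hl⟩ by
        simp [Fin.mk_lt_mk])))).1
    split
    · rename_i hlk
      subst hlk
      ext x
      simp only [Set.mem_inter_iff, Set.mem_singleton_iff]
      constructor
      · rintro ⟨hx1, hx2⟩
        have h1 := hmem1 x hx1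
        have h2 := hmem2 x hx2
        have heq : projv v x = projv v ((p ∘ σ) ⟨k + 1, hk⟩) := le_antisymm h1 h2
        exact projv_eq_right hx1 (hg (show (⟨k, by omega⟩ : Fin n) < ⟨k + 1, hk⟩ by
          simp [Fin.mk_lt_mk])) heq
      · rintro rfl
        exact ⟨right_mem_segment _ _ _, left_mem_segment _ _ _⟩
    · rename_i hlk
      rw [Set.disjoint_left]
      intro x hx1 hx2
      have h1 := hmem1 x hx1
      have h2 := hmem2 x hx2
      have : projv v ((p ∘ σ) ⟨k + 1, hk⟩) < projv v ((p ∘ σ) ⟨l, by omega⟩) :=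
        hg (show (⟨k + 1, hk⟩ : Fin n) < ⟨l, by omega⟩ by simp [Fin.mk_lt_mk]; omega)
      linarith
end
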